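/- arXiv:2312.10668 — 5 statements merged into one kernel-verified Lean document; each statement's English description precedes it below -/
import Mathlib

section
/- Let b ≥ 2, let I = (a/b^r, (a+1)/b^r] be a b-adic interval with 0 ≤ a < b^r, and let h_I be the associated b-adic Haar function (equal to -1 on the first b-adic child subinterval of length 1/b^{r+1}, +1 on the second, and 0 elsewhere). If M = b^{ν+τ} with ν ≥ r+1 and τ ≥ 1 integers, then the sum over j = 1, ..., M of (j/M)·h_I(j/M) equals (M/b²)·|I|² = M/b^{2r+2}. -/
/-- Weighted sum of the `b`-adic Haar function `h_I` over the grid `{j/M}`: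
`∑_{j=1}^M (j/M)·h_I(j/M) = (M/b²)·|I|² = M/b^(2r+2)`, for `M = b^(ν+τ)`,
`ν ≥ r+1`, `τ ≥ 1`. -/
theorem stmt1 (b r ν τ a M : ℕ) (hb : 2 ≤ b) (hν : r + 1 ≤ ν) (hτ : 1 ≤ τ)
    (ha : a < b ^ r) (hM : M = b ^ (ν + τ)) :
    ∑ j ∈ Finset.Icc 1 M,
      ((j : ℝ) / M) *
      ((Set.Ioc ((a : ℝ) / b ^ r + 1 / b ^ (r + 1)) ((a : ℝ) / b ^ r + 2 / b ^ (r + 1))).indicator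
          (fun _ => (1 : ℝ)) ((j : ℝ) / M)
        - (Set.Ioc ((a : ℝ) / b ^ r) ((a : ℝ) / b ^ r + 1 / b ^ (r + 1))).indicator
          (fun _ => (1 : ℝ)) ((j : ℝ) / M))
    = (M : ℝ) / b ^ (2 * r + 2) := by
  have hb0 : (0:ℝ) < b := by
    have : (2:ℝ) ≤ b := by exact_mod_cast hb
    linarith
  obtain ⟨e, he⟩ : ∃ e, ν + τ = r + 1 + e := ⟨ν + τ - (r+1), by omega⟩
  set K := b ^ e with hK
  set A := a * b ^ (e+1) with hA
  have hMr : M = b ^ (r+1) * K := by rw [hM, he, pow_add]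
  have hMpos : 0 < M := by
    rw [hMr]; positivity
  have hM0 : (0:ℝ) < M := by exact_mod_cast hMpos
  -- real identities
  have hbr : (0:ℝ) < (b:ℝ) ^ r := by positivity
  have hbr1 : (0:ℝ) < (b:ℝ) ^ (r+1) := by positivity
  have hMcast : (M:ℝ) = (b:ℝ) ^ (r+1) * K := by
    rw [hMr]; push_cast; ring
  have hKcast : (K:ℝ) = (b:ℝ) ^ e := by push_cast [hK]; ring
  have h1 : (a:ℝ)/b^r = (A:ℝ)/M := by
    rw [hMcast, hKcast, div_eq_div_iff hbr.ne' (by positivity)]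
    push_cast [hA]
    ring
  have h2 : (1:ℝ)/b^(r+1) = (K:ℝ)/M := by
    rw [hMcast, hKcast, div_eq_div_iff hbr1.ne' (by positivity)]
    ring
  -- membership characterizations
  have hmem : ∀ (n j : ℕ), ((j:ℝ)/M ∈ Set.Ioc ((n:ℝ)/M) (((n:ℝ)+K)/M)) ↔ (n < j ∧ j ≤ n + K) := by
    intro n j
    simp only [Set.mem_Ioc, div_lt_div_iff_of_pos_right hM0, div_le_div_iff_of_pos_right hM0]
    constructor
    · rintro ⟨h1, h2⟩
      exact ⟨by exact_mod_cast h1, by exact_mod_cast (by push_cast at h2 ⊢; linarith : (j:ℝ) ≤ ((n + K : ℕ):ℝ))⟩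
    · rintro ⟨h1, h2⟩
      refine ⟨by exact_mod_cast h1, ?_⟩
      have : (j:ℝ) ≤ ((n + K : ℕ):ℝ) := by exact_mod_cast h2
      push_cast at this; linarith
  -- rewrite the two sets
  have hset1 : Set.Ioc ((a : ℝ) / b ^ r) ((a : ℝ) / b ^ r + 1 / b ^ (r + 1))
      = Set.Ioc ((A:ℝ)/M) (((A:ℝ)+K)/M) := by
    rw [h1, h2, ← add_div]
  have hset2 : Set.Ioc ((a : ℝ) / b ^ r + 1 / b ^ (r + 1)) ((a : ℝ) / b ^ r + 2 / b ^ (r + 1))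
      = Set.Ioc (((A+K:ℕ):ℝ)/M) ((((A+K:ℕ):ℝ)+K)/M) := by
    have h2' : (2:ℝ)/b^(r+1) = ((K:ℝ)+K)/M := by
      rw [hMcast, hKcast, div_eq_div_iff hbr1.ne' (by positivity)]; ring
    rw [h1, h2, h2', ← add_div, ← add_div]
    push_cast
    ring_nf
  -- pointwise rewrite of the summand
  have hpt : ∀ j ∈ Finset.Icc 1 M,
      ((j : ℝ) / M) *
      ((Set.Ioc ((a : ℝ) / b ^ r + 1 / b ^ (r + 1)) ((a : ℝ) / b ^ r + 2 / b ^ (r + 1))).indicator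
          (fun _ => (1 : ℝ)) ((j : ℝ) / M)
        - (Set.Ioc ((a : ℝ) / b ^ r) ((a : ℝ) / b ^ r + 1 / b ^ (r + 1))).indicator
          (fun _ => (1 : ℝ)) ((j : ℝ) / M))
      = (if j ∈ Finset.Ioc (A+K) (A+2*K) then (j:ℝ)/M else 0)
        - (if j ∈ Finset.Ioc A (A+K) then (j:ℝ)/M else 0) := by
    intro j _
    rw [hset1, hset2]
    have e1 := hmem (A+K) j
    have e2 := hmem A j
    have m1 : ((j:ℝ)/M ∈ Set.Ioc (((A+K:ℕ):ℝ)/M) ((((A+K:ℕ):ℝ)+K)/M)) ↔ (j ∈ Finset.Ioc (A+K) (A+2*K)) := by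
      rw [e1, Finset.mem_Ioc]; constructor <;> rintro ⟨u, v⟩ <;> exact ⟨u, by omega⟩
    have m2 : ((j:ℝ)/M ∈ Set.Ioc ((A:ℝ)/M) (((A:ℝ)+K)/M)) ↔ (j ∈ Finset.Ioc A (A+K)) := by
      rw [e2, Finset.mem_Ioc]
    have i1 : (Set.Ioc (((A+K:ℕ):ℝ)/M) ((((A+K:ℕ):ℝ)+K)/M)).indicator (fun _ => (1:ℝ)) ((j:ℝ)/M)
        = if j ∈ Finset.Ioc (A+K) (A+2*K) then (1:ℝ) else 0 := by
      rw [Set.indicator_apply]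
      by_cases hc : j ∈ Finset.Ioc (A+K) (A+2*K)
      · rw [if_pos hc, if_pos (m1.mpr hc)]
      · rw [if_neg hc, if_neg (fun hx => hc (m1.mp hx))]
    have i2 : (Set.Ioc ((A:ℝ)/M) (((A:ℝ)+K)/M)).indicator (fun _ => (1:ℝ)) ((j:ℝ)/M)
        = if j ∈ Finset.Ioc A (A+K) then (1:ℝ) else 0 := by
      rw [Set.indicator_apply]
      by_cases hc : j ∈ Finset.Ioc A (A+K)
      · rw [if_pos hc, if_pos (m2.mpr hc)]
      · rw [if_neg hc, if_neg (fun hx => hc (m2.mp hx))]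
    rw [i1, i2]
    by_cases hp : j ∈ Finset.Ioc (A+K) (A+2*K) <;>
      by_cases hq : j ∈ Finset.Ioc A (A+K) <;>
      simp [hp, hq]
  rw [Finset.sum_congr rfl hpt, Finset.sum_sub_distrib]
  -- subset facts
  have hK1 : 1 ≤ K := Nat.one_le_iff_ne_zero.mpr (by positivity)
  have hA2K : A + 2*K ≤ M := by
    have h3 : A + 2*K ≤ (a+1) * b^(e+1) := by
      have h4 : 2 * K ≤ b ^ (e+1) := by
        calc 2 * K ≤ b * b^e := Nat.mul_le_mul_right _ hb
        _ = b^(e+1) := by ring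
      have h5 : (a+1) * b^(e+1) = A + b^(e+1) := by rw [hA]; ring
      omega
    calc A + 2*K ≤ (a+1) * b^(e+1) := h3
      _ ≤ b^r * b^(e+1) := Nat.mul_le_mul_right _ ha
      _ = M := by rw [hMr, hK]; ring
  have hsub1 : Finset.Ioc A (A+K) ⊆ Finset.Icc 1 M := by
    intro j hj; rw [Finset.mem_Ioc] at hj; rw [Finset.mem_Icc]; omega
  have hsub2 : Finset.Ioc (A+K) (A+2*K) ⊆ Finset.Icc 1 M := by
    intro j hj; rw [Finset.mem_Ioc] at hj; rw [Finset.mem_Icc]; omega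
  rw [Finset.sum_ite_mem, Finset.sum_ite_mem,
    Finset.inter_eq_right.mpr hsub1, Finset.inter_eq_right.mpr hsub2]
  -- reindex the first sum
  have hreindex : ∑ j ∈ Finset.Ioc (A+K) (A+2*K), (j:ℝ)/M
      = ∑ j ∈ Finset.Ioc A (A+K), ((j:ℝ)+K)/M := by
    have : Finset.Ioc (A+K) (A+2*K) = (Finset.Ioc A (A+K)).map (addRightEmbedding K) := by
      rw [Finset.map_add_right_Ioc]
      congr 1
      omega
    rw [this, Finset.sum_map]
    apply Finset.sum_congr rfl
    intro j _
    simp only [addRightEmbedding_apply]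
    push_cast
    ring
  rw [hreindex, ← Finset.sum_sub_distrib]
  have : ∀ j ∈ Finset.Ioc A (A+K), ((j:ℝ)+K)/M - (j:ℝ)/M = (K:ℝ)/M := by
    intro j _; field_simp; ring
  rw [Finset.sum_congr rfl this, Finset.sum_const, Nat.card_Ioc]
  have hcard : A + K - A = K := by omega
  rw [hcard, nsmul_eq_mul]
  -- final arithmetic
  rw [hMcast, hKcast, show 2*r+2 = (r+1)+(r+1) from by omega, pow_add]
  field_simp
  ring
end

section
/- Let M be an even positive integer, 0 < ε < 1/2, and let k be an integer with 0 < |k| ≤ εM. Then the number of integers r with 0 ≤ r ≤ M/2 - 1 satisfying 1 - cos(4πkr/M) ≤ 1 - cos(2πε) is at most 2εM. -/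
open Real Finset

lemma trig_aux {ε x : ℝ} (hε1 : 0 < ε) (hε2 : ε < 1/2) (hx0 : 0 ≤ x) (hx1 : x < 1)
    (h : Real.cos (2 * Real.pi * ε) ≤ Real.cos (2 * Real.pi * x)) :
    x ≤ ε ∨ 1 - ε ≤ x := by
  by_contra hc
  push_neg at hc
  obtain ⟨h1, h2⟩ := hc
  have hπ := Real.pi_pos
  rcases le_or_gt x (1/2) with hx | hx
  · have := Real.cos_lt_cos_of_nonneg_of_le_pi (x := 2*Real.pi*ε) (y := 2*Real.pi*x)
      (by positivity) (by nlinarith) (by nlinarith)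
    linarith
  · have heq : Real.cos (2 * Real.pi * x) = Real.cos (2 * Real.pi * (1 - x)) := by
      rw [show 2*Real.pi*(1-x) = 2*Real.pi - 2*Real.pi*x by ring, Real.cos_sub]
      simp [Real.cos_two_pi, Real.sin_two_pi]
    have := Real.cos_lt_cos_of_nonneg_of_le_pi (x := 2*Real.pi*ε) (y := 2*Real.pi*(1-x))
      (by positivity) (by nlinarith) (by nlinarith)
    rw [heq] at h
    linarith

/-- Counting lemma: for `0 < |k| ≤ εM`, at most `2εM` of the integers
`r ∈ {0,…,M/2-1}` satisfy `1 - cos(4πkr/M) ≤ 1 - cos(2πε)`. -/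
theorem stmt9 (M : ℕ) (hM : 0 < M) (hMe : Even M) (ε : ℝ) (hε1 : 0 < ε) (hε2 : ε < 1 / 2)
    (k : ℤ) (hk0 : k ≠ 0) (hk : |(k : ℝ)| ≤ ε * M) :
    (((Finset.range (M / 2)).filter fun r : ℕ =>
        1 - Real.cos (4 * Real.pi * k * (r : ℝ) / M) ≤ 1 - Real.cos (2 * Real.pi * ε)).card : ℝ)
      ≤ 2 * ε * M := by
  classical
  obtain ⟨c, hc⟩ := hMe
  set N : ℕ := M / 2 with hNdef
  have hMN : M = 2 * N := by omega
  have hNpos : 0 < N := by omega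
  set d : ℕ := Int.gcd k (N : ℤ) with hddef
  have hdpos : 0 < d := Int.gcd_pos_of_ne_zero_left _ hk0
  have hdk : (d : ℤ) ∣ k := Int.gcd_dvd_left _ _
  have hdNZ : (d : ℤ) ∣ (N : ℤ) := Int.gcd_dvd_right _ _
  have hdN : d ∣ N := Int.ofNat_dvd.mp hdNZ
  set N' : ℕ := N / d with hN'def
  have hNdN' : N = d * N' := (Nat.mul_div_cancel' hdN).symm
  have hN'pos : 0 < N' := Nat.div_pos (Nat.le_of_dvd hNpos hdN) hdpos
  set k' : ℤ := k / d with hk'def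
  have hkdk' : k = d * k' := (Int.mul_ediv_cancel' hdk).symm
  have hcop : IsCoprime ((N' : ℤ)) k' := by
    rw [Int.isCoprime_iff_gcd_eq_one, Int.gcd_comm]
    have hcast : ((N' : ℤ)) = (N : ℤ) / d := Int.natCast_ediv N d
    rw [hcast, hk'def]
    exact Int.gcd_div_gcd_div_gcd hdpos
  set f : ℕ → ℕ := fun r => ((k * r) % (N : ℤ)).toNat / d with hfdef
  have hs0 : ∀ r : ℕ, 0 ≤ (k * r) % (N : ℤ) := fun r =>
    Int.emod_nonneg _ (by exact_mod_cast hNpos.ne')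
  have hsN : ∀ r : ℕ, (k * r) % (N : ℤ) < N := fun r =>
    Int.emod_lt_of_pos _ (by exact_mod_cast hNpos)
  have hds : ∀ r : ℕ, (d : ℤ) ∣ (k * r) % (N : ℤ) := by
    intro r
    rw [Int.emod_def]
    exact dvd_sub (hdk.mul_right _) (hdNZ.mul_right _)
  have hsf : ∀ r : ℕ, (k * r) % (N : ℤ) = (d : ℤ) * (f r) := by
    intro r
    obtain ⟨j, hj⟩ := hds r
    have hj0 : 0 ≤ j := by
      by_contra hjn
      push_neg at hjn
      nlinarith [hs0 r, hj.symm, (by exact_mod_cast hdpos : (0:ℤ) < d)]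
    have hfj : f r = j.toNat := by
      simp only [hfdef, hj]
      have heq : (d : ℤ) * j = ((d * j.toNat : ℕ) : ℤ) := by
        push_cast [Int.toNat_of_nonneg hj0]; ring
      rw [heq, Int.toNat_natCast]
      exact Nat.mul_div_cancel_left _ hdpos
    rw [hfj, hj, Int.toNat_of_nonneg hj0]
  set T : Finset ℕ := (range N').filter
    (fun j : ℕ => (j : ℝ) ≤ ε * N' ∨ (1 - ε) * (N' : ℝ) ≤ (j : ℝ)) with hTdef
  set S : Finset ℕ := (range N).filter (fun r : ℕ =>
        1 - Real.cos (4 * Real.pi * k * (r : ℝ) / M) ≤ 1 - Real.cos (2 * Real.pi * ε))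
        with hSdef
  have hπ := Real.pi_pos
  have hNR : (0:ℝ) < N := by exact_mod_cast hNpos
  have hN'R : (0:ℝ) < N' := by exact_mod_cast hN'pos
  have hdR : (0:ℝ) < d := by exact_mod_cast hdpos
  have hmaps : ∀ r ∈ S, f r ∈ T := by
    intro r hr
    rw [hSdef, mem_filter, mem_range] at hr
    obtain ⟨hrN, hP⟩ := hr
    set s : ℤ := (k * r) % (N : ℤ) with hs
    have hcos : Real.cos (4 * Real.pi * k * (r : ℝ) / M) =
        Real.cos (2 * Real.pi * ((s : ℝ) / N)) := by
      have hMR : (M : ℝ) = 2 * N := by exact_mod_cast hMN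
      have hq : k * r = (N : ℤ) * ((k * r) / N) + s := (Int.mul_ediv_add_emod _ _).symm
      have hcast : ((k:ℝ) * r) = (N:ℝ) * (((k * (r:ℤ)) / (N:ℤ) : ℤ) : ℝ) + (s:ℝ) := by
        exact_mod_cast congrArg (Int.cast : ℤ → ℝ) hq
      have harg : 4 * Real.pi * k * (r : ℝ) / M =
          2 * Real.pi * ((s:ℝ)/N) + ((k * (r:ℤ)) / (N:ℤ) : ℤ) * (2 * Real.pi) := by
        rw [hMR]
        field_simp
        linear_combination 4 * hcast
      rw [harg, Real.cos_add_int_mul_two_pi]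
    have hcond : Real.cos (2 * Real.pi * ε) ≤ Real.cos (2 * Real.pi * ((s : ℝ) / N)) := by
      rw [← hcos]; linarith
    have hx0 : (0:ℝ) ≤ (s:ℝ)/N := by
      have h1 : (0:ℝ) ≤ (s:ℝ) := by exact_mod_cast hs0 r
      positivity
    have hx1 : (s:ℝ)/N < 1 := by
      rw [div_lt_one hNR]
      exact_mod_cast hsN r
    have htri := trig_aux hε1 hε2 hx0 hx1 hcond
    have hsfr : (s : ℝ) = d * f r := by exact_mod_cast hsf r
    have hNr : (N : ℝ) = d * N' := by exact_mod_cast hNdN'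
    have hfrval : (s:ℝ)/N = (f r : ℝ) / N' := by
      rw [hsfr, hNr]
      exact mul_div_mul_left _ _ (ne_of_gt hdR)
    rw [hTdef, mem_filter, mem_range]
    constructor
    · have h1 : (s : ℤ) < d * N' := by
        calc s < (N : ℤ) := hsN r
          _ = (d : ℤ) * N' := by exact_mod_cast hNdN'
      have h2 : (d:ℤ) * f r < d * N' := by rw [← hsf r]; exact h1
      have h3 : (f r : ℤ) < N' := lt_of_mul_lt_mul_left h2 (by positivity)
      exact_mod_cast h3
    · rw [hfrval] at htri
      rcases htri with h | h
      · left
        rw [div_le_iff₀ hN'R] at h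
        linarith
      · right
        rw [le_div_iff₀ hN'R] at h
        linarith
  have hfiber : ∀ j ∈ T, (S.filter (fun r => f r = j)).card ≤ d := by
    intro j _
    have hcard : (S.filter (fun r => f r = j)).card ≤ (range d).card := by
      apply Finset.card_le_card_of_injOn (fun r => r / N')
      · intro r hr
        rw [mem_coe, mem_filter, hSdef, mem_filter, mem_range] at hr
        have hrN : r < N := hr.1.1
        rw [mem_coe, mem_range]
        refine Nat.div_lt_of_lt_mul ?_
        calc r < N := hrN
          _ = d * N' := hNdN'
          _ = N' * d := Nat.mul_comm _ _
      · intro r hr r' hr' hdiv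
        simp only [mem_coe, mem_filter] at hr hr'
        have hfr : f r = j := hr.2
        have hfr' : f r' = j := hr'.2
        have hseq : (k * r) % (N : ℤ) = (k * r') % (N : ℤ) := by
          rw [hsf r, hsf r', hfr, hfr']
        have hNdvd : (N : ℤ) ∣ k * r - k * r' :=
          Int.dvd_of_emod_eq_zero (Int.emod_eq_emod_iff_emod_sub_eq_zero.mp hseq)
        have hN'dvd : (N' : ℤ) ∣ k' * ((r:ℤ) - r') := by
          have h1 : ((d:ℤ) * N') ∣ (d:ℤ) * (k' * ((r:ℤ) - r')) := by
            have : ((N:ℤ)) = (d:ℤ) * N' := by exact_mod_cast hNdN'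
            rw [← this]
            have : k * r - k * r' = k * ((r:ℤ) - r') := by ring
            rw [hkdk'] at hNdvd
            convert hNdvd using 1
            ring
          exact (mul_dvd_mul_iff_left (by exact_mod_cast hdpos.ne' : (d:ℤ) ≠ 0)).mp h1
        have hdvd : (N' : ℤ) ∣ ((r:ℤ) - r') := hcop.dvd_of_dvd_mul_left hN'dvd
        have hmod : r % N' = r' % N' := by
          have : (r : ℤ) % N' = (r' : ℤ) % N' :=
            Int.emod_eq_emod_iff_emod_sub_eq_zero.mpr (Int.emod_eq_zero_of_dvd hdvd)
          exact_mod_cast this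
        have hdiv' : r / N' = r' / N' := hdiv
        rw [← Nat.div_add_mod r N', ← Nat.div_add_mod r' N', hdiv', hmod]
    simpa using hcard
  have hScard : S.card ≤ d * T.card :=
    Finset.card_le_mul_card_image_of_maps_to hmaps d hfiber
  -- bound T.card
  have hT1 : ((range N').filter (fun j : ℕ => (j : ℝ) ≤ ε * N')).card ≤ ⌊ε * N'⌋₊ + 1 := by
    have hsub : (range N').filter (fun j : ℕ => (j : ℝ) ≤ ε * N') ⊆ range (⌊ε * N'⌋₊ + 1) := by
      intro j hj
      rw [mem_filter] at hj
      rw [mem_range, Nat.lt_succ_iff]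
      exact Nat.le_floor hj.2
    simpa using Finset.card_le_card hsub
  have hT2 : (((range N').filter (fun j : ℕ => (1 - ε) * (N' : ℝ) ≤ (j : ℝ))).card : ℝ) ≤ ε * N' := by
    set cl : ℕ := ⌈(1 - ε) * (N' : ℝ)⌉₊ with hcl
    have hsub : (range N').filter (fun j : ℕ => (1 - ε) * (N' : ℝ) ≤ (j : ℝ)) ⊆ Ico cl N' := by
      intro j hj
      rw [mem_filter, mem_range] at hj
      rw [mem_Ico]
      exact ⟨Nat.ceil_le.mpr hj.2, hj.1⟩
    have hcard := Finset.card_le_card hsub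
    rw [Nat.card_Ico] at hcard
    have hcl1 : ((1 - ε) * (N' : ℝ)) ≤ cl := Nat.le_ceil _
    rcases le_total cl N' with h | h
    · have : ((N' - cl : ℕ) : ℝ) ≤ ε * N' := by
        rw [Nat.cast_sub h]
        linarith
      calc (((range N').filter _).card : ℝ) ≤ ((N' - cl : ℕ) : ℝ) := by exact_mod_cast hcard
        _ ≤ ε * N' := this
    · have : N' - cl = 0 := by omega
      rw [this] at hcard
      have h0 : ((range N').filter (fun j : ℕ => (1 - ε) * (N' : ℝ) ≤ (j : ℝ))).card = 0 := by omega
      rw [h0]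
      simp only [Nat.cast_zero]
      positivity
  have hTcard : (T.card : ℝ) ≤ 2 * ε * N' + 1 := by
    have hTsplit : T ⊆ ((range N').filter (fun j : ℕ => (j : ℝ) ≤ ε * N')) ∪
        ((range N').filter (fun j : ℕ => (1 - ε) * (N' : ℝ) ≤ (j : ℝ))) := by
      rw [hTdef, ← Finset.filter_or]
    have := Finset.card_le_card hTsplit
    have hle := le_trans this (Finset.card_union_le _ _)
    have h1 : ((⌊ε * N'⌋₊ : ℕ) : ℝ) ≤ ε * N' := Nat.floor_le (by positivity)
    have hle' : (T.card : ℝ) ≤ (((range N').filter (fun j : ℕ => (j : ℝ) ≤ ε * N')).card : ℝ) +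
        (((range N').filter (fun j : ℕ => (1 - ε) * (N' : ℝ) ≤ (j : ℝ))).card : ℝ) := by
      exact_mod_cast hle
    have hT1' : (((range N').filter (fun j : ℕ => (j : ℝ) ≤ ε * N')).card : ℝ) ≤ ε * N' + 1 := by
      calc (((range N').filter (fun j : ℕ => (j : ℝ) ≤ ε * N')).card : ℝ)
          ≤ ((⌊ε * N'⌋₊ + 1 : ℕ) : ℝ) := by exact_mod_cast hT1
        _ ≤ ε * N' + 1 := by push_cast; linarith
    linarith
  -- final arithmetic
  have hdk2 : (d : ℝ) ≤ ε * M := by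
    have h1 : (d : ℤ) ∣ |k| := (dvd_abs _ _).mpr hdk
    have h2 : (d : ℤ) ≤ |k| := Int.le_of_dvd (abs_pos.mpr hk0) h1
    have h3 : (d : ℝ) ≤ |(k:ℝ)| := by exact_mod_cast h2
    linarith
  have hMR : (M : ℝ) = 2 * N := by exact_mod_cast hMN
  have hNr : (N : ℝ) = d * N' := by exact_mod_cast hNdN'
  have hSR : (S.card : ℝ) ≤ d * T.card := by exact_mod_cast hScard
  have hfinal : (S.card : ℝ) ≤ 2 * ε * M := by
    have h1 : (S.card : ℝ) ≤ d * (2 * ε * N' + 1) := by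
      calc (S.card : ℝ) ≤ d * T.card := hSR
        _ ≤ d * (2 * ε * N' + 1) := by
            apply mul_le_mul_of_nonneg_left hTcard (le_of_lt hdR)
    have h2 : (d:ℝ) * (2 * ε * N' + 1) = 2 * ε * N + d := by
      rw [hNr]; ring
    rw [h2] at h1
    rw [hMR] at hdk2 ⊢
    linarith
  exact hfinal
end

section
/- Let M be an even positive integer, h ≥ 1, 0 < ε < 1/(8h), and k = (k₁,...,k_h) ∈ J_M^h ∩ [-εM, εM]^h with k₁⋯k_h ≠ 0. Then Σ_{r=⌊M/4⌋}^{M/2-1} Π_{u=1}^h (1 - cos(4πk_u r/M)) ≥ (M/4)·(1 - 8εh)·(1 - cos(2πε))^h. -/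
open Finset

private lemma cos_window {ε x : ℝ} (hε : 0 < ε) (hε8 : ε ≤ 1/8)
    (hx0 : 0 ≤ x) (hx1 : x < 1)
    (h : Real.cos (2 * Real.pi * ε) < Real.cos (2 * Real.pi * x)) :
    x < ε ∨ 1 - ε < x := by
  by_contra hc
  push_neg at hc
  obtain ⟨h1, h2⟩ := hc
  have hπ := Real.pi_pos
  rcases le_or_gt x (1/2) with hx | hx
  · have : Real.cos (2*Real.pi*x) ≤ Real.cos (2*Real.pi*ε) :=
      Real.cos_le_cos_of_nonneg_of_le_pi (by positivity) (by nlinarith) (by nlinarith)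
    linarith
  · have he : Real.cos (2*Real.pi*x) = Real.cos (2*Real.pi*(1-x)) := by
      rw [show 2*Real.pi*(1-x) = 2*Real.pi - 2*Real.pi*x by ring, Real.cos_two_pi_sub]
    have : Real.cos (2*Real.pi*(1-x)) ≤ Real.cos (2*Real.pi*ε) :=
      Real.cos_le_cos_of_nonneg_of_le_pi (by positivity) (by nlinarith) (by nlinarith)
    linarith


private lemma count_bad (M : ℕ) (hM : 0 < M) (hMe : Even M) (ε : ℝ) (hε : 0 < ε)
    (k : ℤ) (hk0 : k ≠ 0) (hkε : |(k : ℝ)| ≤ ε * M) :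
    (((Finset.Icc (M/4) (M/2-1)).filter
      (fun r : ℕ => ((((2*k*r) % (M:ℤ)) : ℤ) : ℝ) ≤ ε*M ∨
        (M:ℝ) - ε*M < (((2*k*r) % (M:ℤ) : ℤ) : ℝ))).card : ℝ)
      ≤ 2 * ε * M := by
  obtain ⟨c, hc⟩ := hMe
  have hM2' : 2 ≤ M := by omega
  set g : ℕ := Int.gcd (2*k) (M:ℤ) with hg
  have h2k : (2*k) ≠ 0 := by simp [hk0]
  have hgpos : 0 < g := Int.gcd_pos_of_ne_zero_left _ h2k
  have hg2k : (g:ℤ) ∣ 2*k := Int.gcd_dvd_left _ _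
  have hgM : (g:ℤ) ∣ (M:ℤ) := Int.gcd_dvd_right _ _
  have hgMn : g ∣ M := by exact_mod_cast hgM
  have h2g : 2 ∣ g := by
    have h2 : (2:ℤ) ∣ (g:ℤ) := Int.dvd_coe_gcd (dvd_mul_right 2 k) ⟨(c:ℤ), by push_cast [hc]; ring⟩
    exact_mod_cast h2
  set m' : ℕ := M / g with hm'
  have hMgm : M = g * m' := (Nat.mul_div_cancel' hgMn).symm
  have hm'pos : 0 < m' := Nat.div_pos (Nat.le_of_dvd hM hgMn) hgpos
  have hM2 : M / 2 = (g / 2) * m' := by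
    obtain ⟨g2, hgg2⟩ := h2g
    rw [hgg2] at hMgm ⊢
    rw [Nat.mul_div_cancel_left _ (by norm_num), hMgm, Nat.mul_assoc,
      Nat.mul_div_cancel_left _ (by norm_num)]
  set N : ℤ := ⌊ε * M / g⌋ with hN
  have hgR : (0:ℝ) < (g:ℝ) := by exact_mod_cast hgpos
  have hN0 : 0 ≤ N := Int.floor_nonneg.mpr (by positivity)
  set T : Finset ℤ := (Finset.Icc (0:ℤ) ((M:ℤ)-1)).filter
      (fun t => (g:ℤ) ∣ t ∧ ((t:ℝ) ≤ ε*M ∨ (M:ℝ) - ε*M < (t:ℝ))) with hT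
  set Bad : Finset ℕ := (Finset.Icc (M/4) (M/2-1)).filter
      (fun r : ℕ => ((((2*k*r) % (M:ℤ)) : ℤ) : ℝ) ≤ ε*M ∨
        (M:ℝ) - ε*M < (((2*k*r) % (M:ℤ) : ℤ) : ℝ)) with hBad
  -- Step 1: Bad.card ≤ (g/2) * T.card
  have step1 : Bad.card ≤ (g/2) * T.card := by
    have hinj := Finset.card_le_card_of_injOn
      (fun r : ℕ => ((r / m' : ℕ), ((2*k*r) % (M:ℤ) : ℤ)))
      (s := Bad) (t := (Finset.range (g/2)) ×ˢ T) ?_ ?_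
    · simpa [Finset.card_product] using hinj
    · intro r hr
      rw [hBad, Finset.mem_coe, Finset.mem_filter, Finset.mem_Icc] at hr
      obtain ⟨⟨hr1, hr2⟩, hr3⟩ := hr
      have hrM2 : r < M / 2 := by omega
      show ((r / m' : ℕ), ((2*k*(r:ℤ)) % (M:ℤ) : ℤ)) ∈ (Finset.range (g/2)) ×ˢ T
      rw [Finset.mem_product, Finset.mem_range, hT, Finset.mem_filter, Finset.mem_Icc]
      refine ⟨?_, ⟨?_, ?_⟩, ?_, hr3⟩
      · rw [Nat.div_lt_iff_lt_mul hm'pos]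
        exact hM2 ▸ hrM2
      · exact Int.emod_nonneg _ (by exact_mod_cast hM.ne')
      · have := Int.emod_lt_of_pos (2*k*r) (b := (M:ℤ)) (by exact_mod_cast hM)
        omega
      · rw [Int.emod_def]
        exact dvd_sub (hg2k.mul_right _) (hgM.mul_right _)
    · intro r1 hr1 r2 hr2 heq
      simp only [Prod.mk.injEq] at heq
      obtain ⟨hdiv, hmod⟩ := heq
      have hMdvd : (M:ℤ) ∣ (2*k) * ((r2:ℤ) - r1) := by
        have h1 : (2*k*r1) ≡ (2*k*r2) [ZMOD (M:ℤ)] := hmod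
        have h2 := Int.ModEq.dvd h1
        convert h2 using 1; ring
      have hcop : Int.gcd ((2*k)/g) ((M:ℤ)/g) = 1 :=
        Int.gcd_div_gcd_div_gcd (by exact_mod_cast hgpos)
      have hMg : (M:ℤ) = (g:ℤ) * m' := by exact_mod_cast hMgm
      have hm'c : ((m':ℕ):ℤ) = (M:ℤ)/g := by
        rw [hMg, Int.mul_ediv_cancel_left _ (by exact_mod_cast hgpos.ne')]
      have h2kg : 2*k = (g:ℤ) * ((2*k)/g) := (Int.ediv_mul_cancel hg2k).symm ▸
        (Int.mul_ediv_cancel' hg2k).symm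
      have hm'dvd : ((m':ℕ):ℤ) ∣ ((r2:ℤ) - r1) := by
        have hdd : (g:ℤ) * m' ∣ (g:ℤ) * (((2*k)/g) * ((r2:ℤ) - r1)) := by
          rw [← hMg]
          have : (g:ℤ) * (((2*k)/g) * ((r2:ℤ) - r1)) = (2*k) * ((r2:ℤ) - r1) := by
            rw [← mul_assoc, ← h2kg]
          rw [this]; exact hMdvd
        have hmd := (mul_dvd_mul_iff_left (a := (g:ℤ))
          (by exact_mod_cast hgpos.ne')).mp hdd
        refine Int.dvd_of_dvd_mul_right_of_gcd_one hmd ?_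
        rw [hm'c, Int.gcd_comm]; exact hcop
      have hmodm : r1 % m' = r2 % m' := by
        have h1 : (r1:ℤ) ≡ (r2:ℤ) [ZMOD (m':ℤ)] := Int.modEq_iff_dvd.mpr hm'dvd
        have h2 : (r1:ℤ) % (m':ℤ) = (r2:ℤ) % (m':ℤ) := h1
        exact_mod_cast h2
      have e : m' * (r1 / m') + r1 % m' = m' * (r2 / m') + r2 % m' := by
        rw [hdiv, hmodm]
      rw [Nat.div_add_mod, Nat.div_add_mod] at e
      exact e
  -- Step 2: T.card small
  have hgZ : ((g:ℤ) ≠ 0) := by exact_mod_cast hgpos.ne'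
  have hMgZ : ((M:ℤ)) = (g:ℤ) * m' := by exact_mod_cast hMgm
  have step2 : (T.card : ℝ) ≤ 2 * (ε * M / g) + 1 := by
    set T1 : Finset ℤ := (Finset.Icc (0:ℤ) ((M:ℤ)-1)).filter
        (fun t => (g:ℤ) ∣ t ∧ (t:ℝ) ≤ ε*M) with hT1
    set T2 : Finset ℤ := (Finset.Icc (0:ℤ) ((M:ℤ)-1)).filter
        (fun t => (g:ℤ) ∣ t ∧ (M:ℝ) - ε*M < (t:ℝ)) with hT2
    have hsub : T ⊆ T1 ∪ T2 := by
      intro t ht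
      rw [hT, Finset.mem_filter] at ht
      rw [Finset.mem_union, hT1, hT2, Finset.mem_filter, Finset.mem_filter]
      tauto
    have hc1 : T1.card ≤ (Finset.Icc (0:ℤ) N).card := by
      refine Finset.card_le_card_of_injOn (s := T1) (t := Finset.Icc (0:ℤ) N)
        (fun t => t / g) ?_ ?_
      · intro t ht
        rw [hT1, Finset.mem_coe, Finset.mem_filter, Finset.mem_Icc] at ht
        obtain ⟨⟨ht0, htM⟩, ⟨j, hj⟩, htε⟩ := ht
        rw [Finset.mem_coe, Finset.mem_Icc]
        subst hj
        simp only [Int.mul_ediv_cancel_left _ hgZ]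
        have hj0 : 0 ≤ j := nonneg_of_mul_nonneg_right (by exact_mod_cast ht0) (by exact_mod_cast hgpos)
        refine ⟨hj0, Int.le_floor.mpr ?_⟩
        rw [le_div_iff₀ hgR]
        have : ((g:ℤ) * j : ℝ) ≤ ε * M := by exact_mod_cast htε
        push_cast at this ⊢
        linarith
      · intro t1 ht1 t2 ht2 heq
        rw [hT1, Finset.coe_filter] at ht1 ht2
        obtain ⟨-, hd1, -⟩ := ht1
        obtain ⟨-, hd2, -⟩ := ht2
        have heq' : t1 / (g:ℤ) = t2 / (g:ℤ) := heq
        rw [← Int.ediv_mul_cancel hd1, ← Int.ediv_mul_cancel hd2, heq']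
    have hc2 : T2.card ≤ (Finset.Icc ((m':ℤ) - N) ((m':ℤ) - 1)).card := by
      refine Finset.card_le_card_of_injOn (s := T2)
        (t := Finset.Icc ((m':ℤ) - N) ((m':ℤ) - 1)) (fun t => t / g) ?_ ?_
      · intro t ht
        rw [hT2, Finset.mem_coe, Finset.mem_filter, Finset.mem_Icc] at ht
        obtain ⟨⟨ht0, htM⟩, ⟨j, hj⟩, htε⟩ := ht
        rw [Finset.mem_coe, Finset.mem_Icc]
        subst hj
        simp only [Int.mul_ediv_cancel_left _ hgZ]
        constructor
        · -- m' - N ≤ j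
          have hlt : ((m':ℝ) - ε * M / g) < (j:ℝ) := by
            have h1 : (M:ℝ) - ε*M < (g:ℝ) * j := by exact_mod_cast htε
            have h2 : (M:ℝ) = (g:ℝ) * m' := by exact_mod_cast hMgZ
            rw [← mul_lt_mul_iff_of_pos_right hgR]
            have h3 : (ε * M / g : ℝ) * g = ε * M := div_mul_cancel₀ _ hgR.ne'
            nlinarith [h1, h2, h3]
          have hN1 : (ε * M / g : ℝ) < (N:ℝ) + 1 := Int.lt_floor_add_one _
          have : ((m':ℤ) - N - 1 : ℤ) < j := by
            have : (((m':ℤ) - N - 1 : ℤ) : ℝ) < (j:ℝ) := by push_cast; linarith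
            exact_mod_cast this
          omega
        · -- j ≤ m' - 1
          have : (g:ℤ) * j < (g:ℤ) * m' := by omega
          have := lt_of_mul_lt_mul_left this (by positivity : (0:ℤ) ≤ (g:ℤ))
          omega
      · intro t1 ht1 t2 ht2 heq
        rw [hT2, Finset.coe_filter] at ht1 ht2
        obtain ⟨-, hd1, -⟩ := ht1
        obtain ⟨-, hd2, -⟩ := ht2
        have heq' : t1 / (g:ℤ) = t2 / (g:ℤ) := heq
        rw [← Int.ediv_mul_cancel hd1, ← Int.ediv_mul_cancel hd2, heq']
    have hcard1 : (Finset.Icc (0:ℤ) N).card = (N+1).toNat := by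
      rw [Int.card_Icc]; norm_num
    have hcard2 : (Finset.Icc ((m':ℤ) - N) ((m':ℤ) - 1)).card = N.toNat := by
      rw [Int.card_Icc]; congr 1; omega
    have htot : T.card ≤ (N+1).toNat + N.toNat := by
      calc T.card ≤ (T1 ∪ T2).card := Finset.card_le_card hsub
        _ ≤ T1.card + T2.card := Finset.card_union_le _ _
        _ ≤ (N+1).toNat + N.toNat := by omega
    have hNr : ((N:ℤ):ℝ) ≤ ε * M / g := Int.floor_le _
    have e1 : (((N+1).toNat : ℕ) : ℝ) = (N:ℝ)+1 := by
      have := Int.toNat_of_nonneg (by omega : (0:ℤ) ≤ N+1)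
      exact_mod_cast congrArg (fun z : ℤ => (z:ℝ)) this
    have e2 : ((N.toNat : ℕ) : ℝ) = (N:ℝ) := by
      have := Int.toNat_of_nonneg hN0
      exact_mod_cast congrArg (fun z : ℤ => (z:ℝ)) this
    have h1 : (((N+1).toNat + N.toNat : ℕ) : ℝ) = ((N:ℝ)+1) + (N:ℝ) := by
      push_cast [e1, e2]; ring
    calc (T.card : ℝ) ≤ (((N+1).toNat + N.toNat : ℕ) : ℝ) := by exact_mod_cast htot
      _ = ((N:ℝ)+1) + (N:ℝ) := h1
      _ ≤ 2 * (ε * M / g) + 1 := by linarith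
  -- combine
  have hgcast : ((g/2 : ℕ) : ℝ) = (g:ℝ)/2 := by
    rw [Nat.cast_div h2g (by norm_num)]
    norm_num
  have hgle : (g:ℝ) ≤ 2*(ε*M) := by
    have hgnat : g ≤ (2*k).natAbs := Nat.le_of_dvd (Int.natAbs_pos.mpr h2k) (Nat.gcd_dvd_left _ _)
    have h1 : (g:ℝ) ≤ (((2*k).natAbs : ℕ):ℝ) := by exact_mod_cast hgnat
    have h2 : (((2*k).natAbs : ℕ):ℝ) = |((2*k : ℤ):ℝ)| := by
      rw [Nat.cast_natAbs, Int.cast_abs]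
    rw [h2] at h1
    have h3 : |((2*k : ℤ):ℝ)| = 2 * |(k:ℝ)| := by
      push_cast
      rw [abs_mul]
      norm_num
    rw [h3] at h1
    linarith
  calc ((Bad.card : ℕ) : ℝ) ≤ (((g/2) * T.card : ℕ) : ℝ) := by exact_mod_cast step1
    _ = ((g:ℝ)/2) * T.card := by push_cast [hgcast]; ring
    _ ≤ ((g:ℝ)/2) * (2 * (ε * M / g) + 1) := by
        apply mul_le_mul_of_nonneg_left step2 (by positivity)
    _ = ε*M + (g:ℝ)/2 := by field_simp
    _ ≤ 2 * ε * M := by linarith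


/-- Lower bound for the trigonometric sum over `r ∈ {⌊M/4⌋,…,M/2-1}` of the product
`∏ᵤ (1 - cos(4πkᵤr/M))`, for `k ∈ J_M^h ∩ [-εM,εM]^h` with all components nonzero. -/
theorem stmt10 (h M : ℕ) (hh : 1 ≤ h) (hM : 0 < M) (hMe : Even M)
    (ε : ℝ) (hε1 : 0 < ε) (hε2 : ε < 1 / (8 * h))
    (k : Fin h → ℤ)
    (hk : ∀ u, -(M : ℤ) / 2 ≤ k u ∧ k u < (M : ℤ) / 2 ∧ |(k u : ℝ)| ≤ ε * M ∧ k u ≠ 0) :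
    (M : ℝ) / 4 * ((1 - 8 * ε * h) * (1 - Real.cos (2 * Real.pi * ε)) ^ h) ≤
      ∑ r ∈ Finset.Icc (M / 4) (M / 2 - 1),
        ∏ u, (1 - Real.cos (4 * Real.pi * (k u) * (r : ℝ) / M)) := by
  classical
  have hπ := Real.pi_pos
  have hh' : (1:ℝ) ≤ (h:ℝ) := by exact_mod_cast hh
  have hMR : (0:ℝ) < (M:ℝ) := by exact_mod_cast hM
  obtain ⟨cM, hcM⟩ := hMe
  have hM2' : 2 ≤ M := by omega
  have hε8 : ε ≤ 1/8 := by
    have h1 : (1:ℝ)/(8*h) ≤ 1/8 := by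
      apply one_div_le_one_div_of_le (by norm_num)
      nlinarith
    linarith
  set c := 1 - Real.cos (2*Real.pi*ε) with hcdef
  have hc0 : 0 ≤ c := by
    have := Real.cos_le_one (2*Real.pi*ε); rw [hcdef]; linarith
  set S := Finset.Icc (M/4) (M/2-1) with hS
  set f : Fin h → ℕ → ℝ := fun u r => 1 - Real.cos (4*Real.pi*(k u)*(r:ℝ)/M) with hf
  have hf0 : ∀ u r, 0 ≤ f u r := by
    intro u r
    have := Real.cos_le_one (4*Real.pi*(k u)*(r:ℝ)/M)
    rw [hf]; dsimp; linarith
  set B : Fin h → Finset ℕ := fun u => (Finset.Icc (M/4) (M/2-1)).filter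
      (fun r : ℕ => ((((2*(k u)*r) % (M:ℤ)) : ℤ) : ℝ) ≤ ε*M ∨
        (M:ℝ) - ε*M < (((2*(k u)*r) % (M:ℤ) : ℤ) : ℝ)) with hB
  set G := S.filter (fun r => ∀ u, c ≤ f u r) with hG
  show (M:ℝ)/4 * ((1 - 8*ε*(h:ℝ)) * c^h) ≤ ∑ r ∈ S, ∏ u, f u r
  -- bad r is in B u
  have hbad : ∀ (u : Fin h) (r : ℕ), r ∈ S → f u r < c → r ∈ B u := by
    intro u r hr hlt
    set t : ℤ := (2*(k u)*r) % (M:ℤ) with ht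
    have ht0 : (0:ℤ) ≤ t := Int.emod_nonneg _ (by exact_mod_cast hM.ne')
    have htM : t < (M:ℤ) := Int.emod_lt_of_pos _ (by exact_mod_cast hM)
    have hcos : Real.cos (4*Real.pi*(k u)*(r:ℝ)/M) = Real.cos (2*Real.pi*((t:ℝ)/M)) := by
      have hdm := Int.mul_ediv_add_emod (2*(k u)*r) (M:ℤ)
      set q : ℤ := (2*(k u)*r) / (M:ℤ) with hq
      have hqR : (M:ℝ)*(q:ℝ) + (t:ℝ) = 2*((k u):ℝ)*(r:ℝ) := by exact_mod_cast hdm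
      have harg : 4*Real.pi*(k u)*(r:ℝ)/M = 2*Real.pi*((t:ℝ)/M) + (q:ℝ)*(2*Real.pi) := by
        field_simp
        linear_combination (-2) * hqR
      rw [harg, Real.cos_add_int_mul_two_pi]
    have hlt' : Real.cos (2*Real.pi*ε) < Real.cos (2*Real.pi*((t:ℝ)/M)) := by
      rw [hf] at hlt; dsimp at hlt
      rw [hcos] at hlt
      rw [hcdef] at hlt
      linarith
    have hx0 : (0:ℝ) ≤ (t:ℝ)/M := by positivity
    have hx1 : (t:ℝ)/M < 1 := by
      rw [div_lt_one hMR]; exact_mod_cast htM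
    rcases cos_window hε1 hε8 hx0 hx1 hlt' with hcase | hcase
    · rw [hB]; dsimp only
      rw [Finset.mem_filter]
      refine ⟨hr, Or.inl ?_⟩
      rw [div_lt_iff₀ hMR] at hcase
      rw [← ht]
      nlinarith
    · rw [hB]; dsimp only
      rw [Finset.mem_filter]
      refine ⟨hr, Or.inr ?_⟩
      rw [lt_div_iff₀ hMR] at hcase
      rw [← ht]
      nlinarith
  -- covering
  have hcover : S ⊆ G ∪ Finset.univ.biUnion B := by
    intro r hr
    by_cases hgood : ∀ u, c ≤ f u r
    · exact Finset.mem_union_left _ (by rw [hG, Finset.mem_filter]; exact ⟨hr, hgood⟩)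
    · push_neg at hgood
      obtain ⟨u, hu⟩ := hgood
      exact Finset.mem_union_right _
        (Finset.mem_biUnion.mpr ⟨u, Finset.mem_univ u, hbad u r hr hu⟩)
  have hcards : S.card ≤ G.card + ∑ u : Fin h, (B u).card := by
    calc S.card ≤ (G ∪ Finset.univ.biUnion B).card := Finset.card_le_card hcover
      _ ≤ G.card + (Finset.univ.biUnion B).card := Finset.card_union_le _ _
      _ ≤ G.card + ∑ u : Fin h, (B u).card := by
          gcongr; exact Finset.card_biUnion_le
  -- bad cards small
  have hbcard : ∀ u : Fin h, ((B u).card : ℝ) ≤ 2*ε*M := by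
    intro u
    exact count_bad M hM ⟨cM, hcM⟩ ε hε1 (k u) (hk u).2.2.2 (hk u).2.2.1
  have hsumb : (∑ u : Fin h, ((B u).card):ℝ) ≤ (h:ℝ) * (2*ε*M) := by
    push_cast
    calc ∑ u : Fin h, ((B u).card : ℝ) ≤ ∑ u : Fin h, 2*ε*M :=
          Finset.sum_le_sum (fun u _ => hbcard u)
      _ = (h:ℝ) * (2*ε*M) := by
          rw [Finset.sum_const, Finset.card_univ, Fintype.card_fin, nsmul_eq_mul]
  -- S card big
  have hScard : (M:ℝ)/4 ≤ (S.card : ℝ) := by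
    rw [hS, Nat.card_Icc]
    have e1 : M/2 - 1 + 1 = M/2 := by omega
    rw [e1, Nat.cast_sub (by omega : M/4 ≤ M/2)]
    have e2 : ((M/2 : ℕ):ℝ) = (M:ℝ)/2 := by
      rw [Nat.cast_div ⟨cM, by omega⟩ (by norm_num)]
      norm_num
    have e3 : ((M/4 : ℕ):ℝ) ≤ (M:ℝ)/4 := Nat.cast_div_le
    linarith
  -- G card big
  have hGcard : (M:ℝ)/4 * (1 - 8*ε*h) ≤ (G.card : ℝ) := by
    have h1 : (S.card : ℝ) ≤ (G.card : ℝ) + ∑ u : Fin h, ((B u).card : ℝ) := by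
      exact_mod_cast hcards
    have h2 : (∑ u : Fin h, ((B u).card : ℝ)) ≤ (h:ℝ) * (2*ε*M) := by
      exact_mod_cast hsumb
    nlinarith
  -- sum bound
  have hterm : ∀ r ∈ G, c^h ≤ ∏ u, f u r := by
    intro r hr
    rw [hG, Finset.mem_filter] at hr
    calc c^h = ∏ _u : Fin h, c := by
          rw [Finset.prod_const, Finset.card_univ, Fintype.card_fin]
      _ ≤ ∏ u, f u r := Finset.prod_le_prod (fun _ _ => hc0) (fun u _ => hr.2 u)
  have hGsum : (G.card : ℝ) * c^h ≤ ∑ r ∈ G, ∏ u, f u r := by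
    calc (G.card : ℝ) * c^h = ∑ _r ∈ G, c^h := by
          rw [Finset.sum_const, nsmul_eq_mul]
      _ ≤ ∑ r ∈ G, ∏ u, f u r := Finset.sum_le_sum hterm
  have hSsum : ∑ r ∈ G, ∏ u, f u r ≤ ∑ r ∈ S, ∏ u, f u r := by
    apply Finset.sum_le_sum_of_subset_of_nonneg (by rw [hG]; exact Finset.filter_subset _ _)
    intro r _ _
    exact Finset.prod_nonneg (fun u _ => hf0 u r)
  have hch : (0:ℝ) ≤ c^h := pow_nonneg hc0 h
  calc (M : ℝ) / 4 * ((1 - 8 * ε * h) * c ^ h)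
      = ((M:ℝ)/4 * (1 - 8*ε*h)) * c^h := by ring
    _ ≤ (G.card : ℝ) * c^h := mul_le_mul_of_nonneg_right hGcard hch
    _ ≤ ∑ r ∈ G, ∏ u, f u r := hGsum
    _ ≤ ∑ r ∈ S, ∏ u, f u r := hSsum
end

section
/- Let p be a positive integer and for x₁,...,x_{d-1} > 0 define the box R_{(x₁,...,x_{d-1})} = [-x₁,x₁]×⋯×[-x_{d-1},x_{d-1}]×[-p/(x₁⋯x_{d-1}), p/(x₁⋯x_{d-1})] ⊂ ℝ^d. Then for every k ∈ ℤ^d, the iterated integral ∫₁^p ∫₁^{p/x₁} ⋯ ∫₁^{p/(x₁⋯x_{d-2})} χ_{R_{(x₁,...,x_{d-1})}}(k) dx_{d-1}/x_{d-1} ⋯ dx₁/x₁ equals (1/(d-1)!)·(log₊(p/(max(1,|k₁|)⋯max(1,|k_d|))))^{d-1}. -/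
open MeasureTheory


lemma onedim0 (a C : ℝ) (ha : 0 < a) (hC : 0 < C) :
    ∫ t : ℝ, Set.indicator (Set.Icc a C) (fun t => t⁻¹) t
      = max (Real.log (C / a)) 0 := by
  rw [integral_indicator measurableSet_Icc]
  rcases le_or_gt a C with h | h
  · rw [MeasureTheory.integral_Icc_eq_integral_Ioc,
      ← intervalIntegral.integral_of_le h, integral_inv_of_pos ha hC]
    rw [max_eq_left]
    exact Real.log_nonneg (by rw [le_div_iff₀ ha]; linarith)
  · rw [Set.Icc_eq_empty (not_le.mpr h)]
    rw [max_eq_right (Real.log_nonpos (by positivity) (by rw [div_le_one ha]; linarith))]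
    simp


lemma onedim (n : ℕ) (hn : 1 ≤ n) (a C : ℝ) (ha : 0 < a) (hC : 0 < C) :
    ∫ t : ℝ, Set.indicator (Set.Ici a) (fun t => t⁻¹ * (max (Real.log (C / t)) 0) ^ n) t
      = (max (Real.log (C / a)) 0) ^ (n + 1) / (n + 1) := by
  rcases le_or_gt C a with h | h
  · -- everything vanishes
    have h0 : (fun t : ℝ => Set.indicator (Set.Ici a)
        (fun t => t⁻¹ * (max (Real.log (C / t)) 0) ^ n) t) = fun _ => (0:ℝ) := by
      funext t
      by_cases ht : a ≤ t
      · rw [Set.indicator_of_mem (Set.mem_Ici.mpr ht)]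
        have htpos : 0 < t := lt_of_lt_of_le ha ht
        have : Real.log (C / t) ≤ 0 :=
          Real.log_nonpos (by positivity) (by rw [div_le_one htpos]; linarith)
        rw [max_eq_right this, zero_pow (by omega), mul_zero]
      · rw [Set.indicator_of_notMem (fun hm => ht (Set.mem_Ici.mp hm))]
    rw [h0, integral_zero]
    have : Real.log (C / a) ≤ 0 :=
      Real.log_nonpos (by positivity) (by rw [div_le_one ha]; linarith)
    rw [max_eq_right this, zero_pow (by omega), zero_div]
  · -- main case a < C
    have hf : (fun t : ℝ => Set.indicator (Set.Ici a)
        (fun t => t⁻¹ * (max (Real.log (C / t)) 0) ^ n) t)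
        = fun t => Set.indicator (Set.Icc a C) (fun t => t⁻¹ * (Real.log (C / t)) ^ n) t := by
      funext t
      by_cases ht : a ≤ t
      · rw [Set.indicator_of_mem (Set.mem_Ici.mpr ht)]
        have htpos : 0 < t := lt_of_lt_of_le ha ht
        by_cases htC : t ≤ C
        · rw [Set.indicator_of_mem (Set.mem_Icc.mpr ⟨ht, htC⟩), max_eq_left]
          exact Real.log_nonneg (by rw [le_div_iff₀ htpos]; linarith)
        · rw [Set.indicator_of_notMem (by simp [htC] : t ∉ Set.Icc a C)]
          have : Real.log (C / t) ≤ 0 :=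
            Real.log_nonpos (by positivity) (by rw [div_le_one htpos]; linarith)
          rw [max_eq_right this, zero_pow (by omega), mul_zero]
      · rw [Set.indicator_of_notMem (fun hm => ht (Set.mem_Ici.mp hm)),
          Set.indicator_of_notMem (fun hm => ht hm.1)]
    rw [hf, integral_indicator measurableSet_Icc,
      MeasureTheory.integral_Icc_eq_integral_Ioc, ← intervalIntegral.integral_of_le h.le]
    have key : ∫ t in a..C, t⁻¹ * (Real.log (C / t)) ^ n
        = (fun t => -(Real.log (C / t)) ^ (n + 1) / (n + 1)) C
          - (fun t => -(Real.log (C / t)) ^ (n + 1) / (n + 1)) a := by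
      refine intervalIntegral.integral_eq_sub_of_hasDerivAt (f := fun t => -(Real.log (C / t)) ^ (n + 1) / (n + 1)) (f' := fun t => t⁻¹ * (Real.log (C / t)) ^ n) ?_ ?_
      · intro t ht
        rw [Set.uIcc_of_le h.le] at ht
        have htpos : 0 < t := lt_of_lt_of_le ha ht.1
        have hlog : ∀ s : ℝ, 0 < s → Real.log (C / s) = Real.log C - Real.log s :=
          fun s hs => Real.log_div hC.ne' hs.ne'
        have h1 : HasDerivAt (fun s => Real.log C - Real.log s) (-t⁻¹) t := by
          exact ((hasDerivAt_const t (Real.log C)).sub (Real.hasDerivAt_log htpos.ne')).congr_deriv (by ring)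
        have h2 := (((h1.pow (n + 1)).neg).div_const ((n:ℝ) + 1))
        have heq : HasDerivAt (fun s => -(Real.log (C / s)) ^ (n + 1) / (n + 1))
            (-(↑(n + 1) * (Real.log C - Real.log t) ^ (n + 1 - 1) * -t⁻¹) / (↑n + 1)) t := by
          apply h2.congr_of_eventuallyEq
          filter_upwards [eventually_gt_nhds htpos] with s hs
          rw [hlog s hs]
          rfl
        convert heq using 1
        show t⁻¹ * (Real.log (C / t)) ^ n = _
        rw [hlog t htpos]
        push_cast
        have hn1 : ((n:ℝ) + 1) ≠ 0 := by positivity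
        field_simp
        all_goals rfl
      · apply ContinuousOn.intervalIntegrable
        apply ContinuousOn.mul
        · exact continuousOn_inv₀.mono (by
            intro t ht
            rw [Set.uIcc_of_le h.le] at ht
            exact (lt_of_lt_of_le ha ht.1).ne')
        · apply ContinuousOn.pow
          apply Real.continuousOn_log.comp (continuousOn_const.div continuousOn_id ?_) ?_
          · intro t ht
            rw [Set.uIcc_of_le h.le] at ht
            exact (lt_of_lt_of_le ha ht.1).ne'
          · intro t ht
            rw [Set.uIcc_of_le h.le] at ht
            simp only [Set.mem_compl_iff, Set.mem_singleton_iff]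
            have htpos : 0 < t := lt_of_lt_of_le ha ht.1
            exact (div_pos hC htpos).ne'
    rw [key]
    have hCC : Real.log (C / C) = 0 := by rw [div_self hC.ne', Real.log_one]
    have hmax : max (Real.log (C / a)) 0 = Real.log (C / a) :=
      max_eq_left (Real.log_nonneg (by rw [le_div_iff₀ ha]; linarith))
    rw [hmax]
    simp only [hCC]
    rw [zero_pow (by omega)]
    push_cast
    ring


lemma measS (n : ℕ) (a : Fin n → ℝ) (M : ℝ) :
    MeasurableSet {x : Fin n → ℝ | (∀ i, a i ≤ x i) ∧ ∏ i, x i ≤ M} := by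
  have hrw : {x : Fin n → ℝ | (∀ i, a i ≤ x i) ∧ ∏ i, x i ≤ M}
      = (⋂ i, {x : Fin n → ℝ | a i ≤ x i}) ∩ {x : Fin n → ℝ | ∏ i, x i ≤ M} := by
    ext x; simp [Set.mem_iInter]
  rw [hrw]
  apply MeasurableSet.inter
  · exact MeasurableSet.iInter fun i => measurableSet_le measurable_const (measurable_pi_apply i)
  · exact measurableSet_le (Finset.measurable_prod _ fun i _ => measurable_pi_apply i)
      measurable_const

lemma integS (n : ℕ) (a : Fin n → ℝ) (ha : ∀ i, 1 ≤ a i) (M : ℝ) :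
    Integrable (Set.indicator {x : Fin n → ℝ | (∀ i, a i ≤ x i) ∧ ∏ i, x i ≤ M}
      (fun x => ∏ i, (x i)⁻¹)) := by
  set S := {x : Fin n → ℝ | (∀ i, a i ≤ x i) ∧ ∏ i, x i ≤ M} with hS
  have hmeas : Measurable (Set.indicator S fun x : Fin n → ℝ => ∏ i, (x i)⁻¹) :=
    Measurable.indicator (Finset.measurable_prod _ fun i _ => (measurable_pi_apply i).inv)
      (measS n a M)
  set B : Set (Fin n → ℝ) := Set.univ.pi fun _ => Set.Icc (1 : ℝ) (max 1 M) with hB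
  have hBsub : S ⊆ B := by
    intro x hx
    obtain ⟨hx1, hx2⟩ := hx
    intro i _
    have h1 : (1:ℝ) ≤ x i := le_trans (ha i) (hx1 i)
    refine ⟨h1, ?_⟩
    have hrest : (1:ℝ) ≤ ∏ j ∈ Finset.univ.erase i, x j := by
      calc (1:ℝ) = ∏ j ∈ Finset.univ.erase i, (1:ℝ) := by simp
      _ ≤ ∏ j ∈ Finset.univ.erase i, x j :=
        Finset.prod_le_prod (fun j _ => zero_le_one) (fun j _ => le_trans (ha j) (hx1 j))
    have hxi : x i ≤ ∏ j, x j := by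
      calc x i = x i * 1 := (mul_one _).symm
      _ ≤ x i * ∏ j ∈ Finset.univ.erase i, x j := by
          apply mul_le_mul_of_nonneg_left hrest (by linarith)
      _ = ∏ j, x j := Finset.mul_prod_erase Finset.univ x (Finset.mem_univ i)
    exact le_max_of_le_right (hxi.trans hx2)
  refine Integrable.mono' (g := Set.indicator B fun _ => (1:ℝ)) ?_ hmeas.aestronglyMeasurable
    (Filter.Eventually.of_forall fun x => ?_)
  · rw [integrable_indicator_iff (MeasurableSet.univ_pi fun _ => measurableSet_Icc)]
    apply (integrableOn_const_iff (C := (1:ℝ))).mpr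
    right
    rw [volume_pi_pi]
    exact ENNReal.prod_lt_top fun i _ => (by rw [Real.volume_Icc]; exact ENNReal.ofReal_lt_top)
  · by_cases hx : x ∈ S
    · rw [Set.indicator_of_mem hx, Set.indicator_of_mem (hBsub hx)]
      rw [Real.norm_eq_abs, abs_of_nonneg]
      · apply Finset.prod_le_one
        · intro i _
          have := le_trans (ha i) (hx.1 i)
          positivity
        · intro i _
          have h1 : (1:ℝ) ≤ x i := le_trans (ha i) (hx.1 i)
          rw [inv_le_one_iff₀]; right; exact h1
      · apply Finset.prod_nonneg
        intro i _
        have := le_trans (ha i) (hx.1 i)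
        positivity
    · rw [Set.indicator_of_notMem hx]
      simp only [norm_zero]
      exact Set.indicator_apply_nonneg fun _ => zero_le_one

lemma key (n : ℕ) (hn : 1 ≤ n) : ∀ (a : Fin n → ℝ), (∀ i, 1 ≤ a i) → ∀ (M : ℝ), 0 < M →
    (∫ x : Fin n → ℝ, Set.indicator {x : Fin n → ℝ | (∀ i, a i ≤ x i) ∧ ∏ i, x i ≤ M}
        (fun x => ∏ i, (x i)⁻¹) x)
      = (max (Real.log (M / ∏ i, a i)) 0) ^ n / n.factorial := by
  induction n, hn using Nat.le_induction with
  | base =>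
    intro a ha M hM
    have ha0 : (0:ℝ) < a 0 := lt_of_lt_of_le one_pos (ha 0)
    have emp := (MeasureTheory.volume_preserving_funUnique (Fin 1) ℝ).symm
    rw [show (∫ x : Fin 1 → ℝ, Set.indicator {x : Fin 1 → ℝ | (∀ i, a i ≤ x i) ∧ ∏ i, x i ≤ M}
        (fun x => ∏ i, (x i)⁻¹) x) = ∫ t : ℝ, Set.indicator
        {x : Fin 1 → ℝ | (∀ i, a i ≤ x i) ∧ ∏ i, x i ≤ M} (fun x => ∏ i, (x i)⁻¹)
        ((MeasurableEquiv.funUnique (Fin 1) ℝ).symm t)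
      from (emp.integral_comp (MeasurableEquiv.measurableEmbedding _) _).symm]
    have hfun : (fun t : ℝ => Set.indicator
        {x : Fin 1 → ℝ | (∀ i, a i ≤ x i) ∧ ∏ i, x i ≤ M} (fun x => ∏ i, (x i)⁻¹)
        ((MeasurableEquiv.funUnique (Fin 1) ℝ).symm t))
        = fun t : ℝ => Set.indicator (Set.Icc (a 0) M) (fun t => t⁻¹) t := by
      funext t
      have hsymm : ((MeasurableEquiv.funUnique (Fin 1) ℝ).symm t) = fun _ : Fin 1 => t := rfl
      rw [hsymm, Set.indicator_apply, Set.indicator_apply]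
      have hcond : ((fun _ : Fin 1 => t) ∈
          {x : Fin 1 → ℝ | (∀ i, a i ≤ x i) ∧ ∏ i, x i ≤ M}) ↔ t ∈ Set.Icc (a 0) M := by
        simp only [Set.mem_setOf_eq, Set.mem_Icc, Fin.prod_univ_one]
        constructor
        · rintro ⟨h1, h2⟩; exact ⟨h1 0, h2⟩
        · rintro ⟨h1, h2⟩; exact ⟨fun i => by rwa [Fin.eq_zero i], h2⟩
      have hval : (∏ i : Fin 1, ((fun _ : Fin 1 => t) i)⁻¹) = t⁻¹ := by simp
      rw [if_congr hcond hval rfl]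
    rw [hfun, onedim0 (a 0) M ha0 hM]
    simp [Fin.prod_univ_one, Nat.factorial]
  | succ n hn ih =>
    intro a ha M hM
    set A : ℝ := ∏ i : Fin n, a i.succ with hA
    have hA1 : (1:ℝ) ≤ A := by
      calc (1:ℝ) = ∏ _i : Fin n, (1:ℝ) := by simp
      _ ≤ ∏ i : Fin n, a i.succ :=
        Finset.prod_le_prod (fun j _ => zero_le_one) (fun j _ => ha j.succ)
    have hApos : (0:ℝ) < A := lt_of_lt_of_le one_pos hA1
    have ha0 : (0:ℝ) < a 0 := lt_of_lt_of_le one_pos (ha 0)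
    set S := {x : Fin (n+1) → ℝ | (∀ i, a i ≤ x i) ∧ ∏ i, x i ≤ M} with hS
    set F := Set.indicator S (fun x : Fin (n+1) → ℝ => ∏ i, (x i)⁻¹) with hF
    have mp := (measurePreserving_piFinSuccAbove (fun _ : Fin (n+1) => (volume : Measure ℝ)) 0).symm
    have hFint : Integrable F := integS (n+1) a ha M
    have hint : Integrable (fun y : ℝ × (Fin n → ℝ) =>
        F ((MeasurableEquiv.piFinSuccAbove (fun _ => ℝ) 0).symm y)) := by
      exact (mp.integrable_comp_emb (MeasurableEquiv.measurableEmbedding _)).mpr hFint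
    have h1 : (∫ x : Fin (n+1) → ℝ, F x)
        = ∫ y : ℝ × (Fin n → ℝ), F ((MeasurableEquiv.piFinSuccAbove (fun _ => ℝ) 0).symm y) :=
      (mp.integral_comp (MeasurableEquiv.measurableEmbedding _) F).symm
    rw [h1, Measure.volume_eq_prod, MeasureTheory.integral_prod _ hint]
    -- now compute the inner integral
    have hcons : ∀ (x0 : ℝ) (xs : Fin n → ℝ),
        ((MeasurableEquiv.piFinSuccAbove (fun _ : Fin (n+1) => ℝ) 0).symm (x0, xs))
          = Fin.cons x0 xs := by
      intro x0 xs
      funext j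
      simp [MeasurableEquiv.piFinSuccAbove_symm_apply, Fin.insertNthEquiv, Fin.insertNth_zero]
    have hinner : ∀ x0 : ℝ, (∫ xs : Fin n → ℝ,
        F ((MeasurableEquiv.piFinSuccAbove (fun _ : Fin (n+1) => ℝ) 0).symm (x0, xs)))
        = Set.indicator (Set.Ici (a 0))
            (fun t => t⁻¹ * ((max (Real.log ((M / A) / t)) 0) ^ n / n.factorial)) x0 := by
      intro x0
      by_cases hx0 : a 0 ≤ x0
      · have hx0pos : (0:ℝ) < x0 := lt_of_lt_of_le ha0 hx0
        have hfun : (fun xs : Fin n → ℝ =>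
            F ((MeasurableEquiv.piFinSuccAbove (fun _ : Fin (n+1) => ℝ) 0).symm (x0, xs)))
            = fun xs => x0⁻¹ * Set.indicator
              {xs : Fin n → ℝ | (∀ i, a i.succ ≤ xs i) ∧ ∏ i, xs i ≤ M / x0}
              (fun xs => ∏ i, (xs i)⁻¹) xs := by
          funext xs
          rw [hcons, hF, Set.indicator_apply, Set.indicator_apply]
          have hcond : (Fin.cons x0 xs ∈ S) ↔
              xs ∈ {xs : Fin n → ℝ | (∀ i, a i.succ ≤ xs i) ∧ ∏ i, xs i ≤ M / x0} := by
            simp only [hS, Set.mem_setOf_eq, Fin.forall_fin_succ, Fin.cons_zero, Fin.cons_succ,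
              Fin.prod_univ_succ]
            rw [le_div_iff₀ hx0pos, mul_comm]
            tauto
          rw [mul_ite, mul_zero]
          have hval : (∏ i : Fin (n+1), (Fin.cons x0 xs i)⁻¹) = x0⁻¹ * ∏ i : Fin n, (xs i)⁻¹ := by
            rw [Fin.prod_univ_succ]; simp
          exact if_congr hcond hval rfl
        rw [hfun, integral_const_mul,
          ih (fun i => a i.succ) (fun i => ha i.succ) (M / x0) (by positivity)]
        rw [Set.indicator_of_mem (Set.mem_Ici.mpr hx0)]
        have hdd : (M / x0) / (∏ i : Fin n, a i.succ) = (M / A) / x0 := by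
          rw [hA]; ring
        rw [hdd]
      · have hzero : ∀ xs : Fin n → ℝ,
            F ((MeasurableEquiv.piFinSuccAbove (fun _ : Fin (n+1) => ℝ) 0).symm (x0, xs)) = 0 := by
          intro xs
          rw [hcons, hF]
          apply Set.indicator_of_notMem
          intro hmem
          exact hx0 (by simpa using hmem.1 0)
        simp only [hzero, integral_zero]
        rw [Set.indicator_of_notMem (fun hm => hx0 (Set.mem_Ici.mp hm))]
    simp only [hinner]
    have hstep : (fun x0 : ℝ => Set.indicator (Set.Ici (a 0))
        (fun t => t⁻¹ * ((max (Real.log ((M / A) / t)) 0) ^ n / n.factorial)) x0)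
        = fun x0 => (n.factorial : ℝ)⁻¹ * Set.indicator (Set.Ici (a 0))
            (fun t => t⁻¹ * (max (Real.log ((M / A) / t)) 0) ^ n) x0 := by
      funext t
      rw [Set.indicator_apply, Set.indicator_apply, mul_ite, mul_zero]
      exact if_congr Iff.rfl (by ring) rfl
    rw [hstep, integral_const_mul, onedim n hn (a 0) (M / A) ha0 (by positivity)]
    have hprod : ∏ i : Fin (n+1), a i = a 0 * A := by rw [hA, Fin.prod_univ_succ]
    have hMA : (M / A) / (a 0) = M / (a 0 * A) := by rw [div_div, mul_comm]
    rw [hprod, hMA, Nat.factorial_succ]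
    have hfac : (0:ℝ) < n.factorial := by positivity
    push_cast
    field_simp

/-- The iterated integral `∫₁^p ⋯ ∫₁^{p/(x₁⋯x_{d-2})} χ_{R_{(x₁,…,x_{d-1})}}(k)
dx_{d-1}/x_{d-1} ⋯ dx₁/x₁` equals
`(1/(d-1)!)·(log₊(p/(max(1,|k₁|)⋯max(1,|k_d|))))^{d-1}`. The iterated integral is
written as an integral over the region
`{x ∈ [1,∞)^{d-1} : ∏ xᵢ ≤ p}` of `χ_R(k)·∏ xᵢ⁻¹`. -/
theorem stmt13 (d p : ℕ) (hd : 2 ≤ d) (hp : 0 < p) (k : Fin d → ℤ) :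
    (∫ x : Fin (d - 1) → ℝ,
      Set.indicator
        {x : Fin (d - 1) → ℝ |
          (∀ i, 1 ≤ x i) ∧ (∏ i, x i) ≤ (p : ℝ) ∧
          (∀ i : Fin (d - 1), |(k (Fin.castLE (Nat.sub_le d 1) i) : ℝ)| ≤ x i) ∧
          |(k ⟨d - 1, by omega⟩ : ℝ)| * ∏ i, x i ≤ (p : ℝ)}
        (fun x => ∏ i, (x i)⁻¹) x)
    = (1 / ((d - 1).factorial : ℝ)) *
        (max (Real.log ((p : ℝ) / ∏ u, max 1 |(k u : ℝ)|)) 0) ^ (d - 1) := by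
  obtain ⟨m, rfl⟩ : ∃ m, d = m + 1 := ⟨d - 1, by omega⟩
  have hm : 1 ≤ m := by omega
  show (∫ x : Fin m → ℝ,
      Set.indicator
        {x : Fin m → ℝ |
          (∀ i, 1 ≤ x i) ∧ (∏ i, x i) ≤ (p : ℝ) ∧
          (∀ i : Fin m, |(k (Fin.castLE (Nat.sub_le (m+1) 1) i) : ℝ)| ≤ x i) ∧
          |(k ⟨m, by omega⟩ : ℝ)| * ∏ i, x i ≤ (p : ℝ)}
        (fun x => ∏ i, (x i)⁻¹) x)
    = (1 / ((m).factorial : ℝ)) *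
        (max (Real.log ((p : ℝ) / ∏ u, max 1 |(k u : ℝ)|)) 0) ^ m
  set a : Fin m → ℝ := fun i => max 1 |(k (Fin.castLE (Nat.sub_le (m+1) 1) i) : ℝ)| with ha_def
  set b : ℝ := max 1 |(k ⟨m, by omega⟩ : ℝ)| with hb_def
  have hb1 : (1:ℝ) ≤ b := le_max_left _ _
  have hb0 : (0:ℝ) < b := lt_of_lt_of_le one_pos hb1
  have ha1 : ∀ i, (1:ℝ) ≤ a i := fun i => le_max_left _ _
  have hpb : (0:ℝ) < (p : ℝ) / b := by positivity
  have hset : {x : Fin (m) → ℝ |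
          (∀ i, 1 ≤ x i) ∧ (∏ i, x i) ≤ (p : ℝ) ∧
          (∀ i : Fin (m), |(k (Fin.castLE (Nat.sub_le (m+1) 1) i) : ℝ)| ≤ x i) ∧
          |(k ⟨m, by omega⟩ : ℝ)| * ∏ i, x i ≤ (p : ℝ)}
      = {x : Fin m → ℝ | (∀ i, a i ≤ x i) ∧ ∏ i, x i ≤ (p : ℝ) / b} := by
    ext x
    simp only [Set.mem_setOf_eq]
    constructor
    · rintro ⟨h1, h2, h3, h4⟩
      refine ⟨fun i => max_le (h1 i) (h3 i), ?_⟩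
      rw [le_div_iff₀ hb0]
      rcases max_choice (1:ℝ) |(k ⟨m, by omega⟩ : ℝ)| with h | h
      · rw [hb_def, h, mul_one]; exact h2
      · rw [hb_def, h, mul_comm]; exact h4
    · rintro ⟨h1, h2⟩
      have hx1 : ∀ i, (1:ℝ) ≤ x i := fun i => le_trans (ha1 i) (h1 i)
      have hxk : ∀ i, |(k (Fin.castLE (Nat.sub_le (m+1) 1) i) : ℝ)| ≤ x i :=
        fun i => le_trans (le_max_right _ _) (h1 i)
      have hprod : (∏ i, x i) * b ≤ (p : ℝ) := (le_div_iff₀ hb0).mp h2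
      have hprod0 : (0:ℝ) ≤ ∏ i, x i :=
        Finset.prod_nonneg fun i _ => le_trans zero_le_one (hx1 i)
      refine ⟨hx1, ?_, hxk, ?_⟩
      · calc (∏ i, x i) = (∏ i, x i) * 1 := (mul_one _).symm
        _ ≤ (∏ i, x i) * b := by nlinarith
        _ ≤ (p : ℝ) := hprod
      · have h5 : |(k ⟨m, by omega⟩ : ℝ)| ≤ b := hb_def ▸ le_max_right _ _
        nlinarith [mul_le_mul_of_nonneg_right h5 hprod0, hprod]
  rw [hset, key m hm a ha1 ((p : ℝ) / b) hpb]
  have hprodsplit : (∏ u : Fin (m+1), max 1 |(k u : ℝ)|) = (∏ i, a i) * b := by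
    rw [Fin.prod_univ_castSucc]
    rfl
  have hApos : (0:ℝ) < ∏ i, a i := Finset.prod_pos fun i _ => lt_of_lt_of_le one_pos (ha1 i)
  have hlog : (p : ℝ) / b / (∏ i, a i) = (p : ℝ) / ∏ u : Fin (m+1), max 1 |(k u : ℝ)| := by
    rw [hprodsplit, div_div, mul_comm]
  rw [hlog]
  show _ = 1 / ((m).factorial : ℝ) * _
  ring
end

section
/- Let d ≢ 1 (mod 4). There exists ε₀ > 0 and c₀ > 0 such that for all real r > 0, all even M, and all k ∈ ℤ^d with 0 < |k| < M/(10√d), setting ω₁ = (2πr + 2π√d/M)|k| − (d+1)π/4 and ω₂ = (4πr + 2π√d/M)|k| − (d+1)π/4, one has cos²(ω₁) + cos²(ω₂) ≥ c₀. In particular it is impossible that both |ω₁ − (π/2 + ℓπ)| ≤ ε₀ and |ω₂ − (π/2 + hπ)| ≤ ε₀ for some integers ℓ, h. -/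
open Real

lemma cos_sq_lower (ω : ℝ)
    (h : ¬ ∃ n : ℤ, |ω - (π/2 + (n : ℝ) * π)| ≤ π/100) :
    (1/2500 : ℝ) ≤ Real.cos ω ^ 2 := by
  by_contra hc
  push_neg at hc
  apply h
  have hπ := Real.pi_pos
  set n : ℤ := round ((ω - π/2)/π) with hn
  refine ⟨n, ?_⟩
  set δ := ω - (π/2 + (n : ℝ) * π) with hδdef
  have hround : |(ω - π/2)/π - (n : ℝ)| ≤ 1/2 := abs_sub_round _
  have hδ : |δ| ≤ π/2 := by
    have hδeq : δ = ((ω - π/2)/π - (n : ℝ)) * π := by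
      field_simp [hδdef]; ring
    rw [hδeq, abs_mul, abs_of_pos hπ]
    nlinarith [abs_nonneg ((ω - π/2)/π - (n : ℝ))]
  obtain ⟨hδ1, hδ2⟩ := abs_le.mp hδ
  have hcos : |Real.cos ω| = |Real.sin δ| := by
    have hω : ω = (δ + π/2) + (n : ℝ) * π := by rw [hδdef]; ring
    rw [hω, Real.cos_add_int_mul_pi, Real.cos_add_pi_div_two, abs_mul, abs_neg]
    have h1 : |((-1:ℝ)) ^ n| = 1 := by
      rcases Int.even_or_odd n with he | ho
      · rw [he.neg_one_zpow]; simp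
      · rw [ho.neg_one_zpow]; simp
    rw [h1, one_mul]
  have hsinabs : Real.sin |δ| = |Real.sin δ| := by
    rcases abs_cases δ with ⟨h1, h2⟩ | ⟨h1, h2⟩
    · rw [h1, abs_of_nonneg (Real.sin_nonneg_of_nonneg_of_le_pi h2 (by linarith))]
    · rw [h1, Real.sin_neg,
        abs_of_nonpos (Real.sin_nonpos_of_nonpos_of_neg_pi_le h2.le (by linarith))]
  have hjordan : 2/π * |δ| ≤ Real.sin |δ| :=
    Real.mul_le_sin (abs_nonneg δ) hδ
  have hcossmall : |Real.cos ω| < 1/50 := by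
    rw [abs_lt]
    constructor <;> nlinarith [sq_nonneg (Real.cos ω)]
  rw [hcos, ← hsinabs] at hcossmall
  have key : 2 * |δ| ≤ π * Real.sin |δ| := by
    have := mul_le_mul_of_nonneg_left hjordan hπ.le
    field_simp at this
    linarith
  nlinarith [mul_lt_mul_of_pos_left hcossmall hπ]

/-- The two-radii trick: for `d ≢ 1 (mod 4)` there are `ε₀, c₀ > 0` such that for
all `r > 0`, even `M`, and `k ∈ ℤ^d` with `0 < |k| < M/(10√d)`, setting
`ω₁ = (2πr + 2π√d/M)|k| − (d+1)π/4` and `ω₂ = (4πr + 2π√d/M)|k| − (d+1)π/4`,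
one has `cos²ω₁ + cos²ω₂ ≥ c₀`; in particular `ω₁, ω₂` cannot both be within
`ε₀` of `π/2` modulo `π`. -/
theorem stmt18 (d : ℕ) (hd : 0 < d) (hd4 : d % 4 ≠ 1) :
    ∃ ε₀ c₀ : ℝ, 0 < ε₀ ∧ 0 < c₀ ∧
      ∀ (r : ℝ) (M : ℕ) (k : Fin d → ℤ), 0 < r → Even M →
        0 < Real.sqrt (∑ i, (k i : ℝ) ^ 2) →
        Real.sqrt (∑ i, (k i : ℝ) ^ 2) < (M : ℝ) / (10 * Real.sqrt d) →
        (c₀ ≤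
            Real.cos ((2 * Real.pi * r + 2 * Real.pi * Real.sqrt d / M) *
                Real.sqrt (∑ i, (k i : ℝ) ^ 2) - (d + 1) * Real.pi / 4) ^ 2
            + Real.cos ((4 * Real.pi * r + 2 * Real.pi * Real.sqrt d / M) *
                Real.sqrt (∑ i, (k i : ℝ) ^ 2) - (d + 1) * Real.pi / 4) ^ 2)
        ∧ ¬ ∃ ℓ h : ℤ,
            |(2 * Real.pi * r + 2 * Real.pi * Real.sqrt d / M) *
                Real.sqrt (∑ i, (k i : ℝ) ^ 2) - (d + 1) * Real.pi / 4
              - (Real.pi / 2 + ℓ * Real.pi)| ≤ ε₀ ∧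
            |(4 * Real.pi * r + 2 * Real.pi * Real.sqrt d / M) *
                Real.sqrt (∑ i, (k i : ℝ) ^ 2) - (d + 1) * Real.pi / 4
              - (Real.pi / 2 + h * Real.pi)| ≤ ε₀ := by
  have hπ := Real.pi_pos
  refine ⟨Real.pi/100, 1/2500, by positivity, by norm_num, ?_⟩
  intro r M k hr hM hs hsM
  set s := Real.sqrt (∑ i, (k i : ℝ) ^ 2) with hsdef
  set ω₁ := (2 * Real.pi * r + 2 * Real.pi * Real.sqrt d / M) * s - (↑d + 1) * Real.pi / 4 with hω₁
  set ω₂ := (4 * Real.pi * r + 2 * Real.pi * Real.sqrt d / M) * s - (↑d + 1) * Real.pi / 4 with hω₂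
  have hsd : 0 < Real.sqrt d := Real.sqrt_pos.mpr (by exact_mod_cast hd)
  have hM0 : 0 < (M : ℝ) := by
    have h0 := hs.trans hsM
    rcases Nat.eq_zero_or_pos M with h | h
    · rw [h] at h0; norm_num at h0
    · exact_mod_cast h
  -- the impossibility part
  have H : ¬ ∃ ℓ h : ℤ,
      |ω₁ - (Real.pi / 2 + ℓ * Real.pi)| ≤ Real.pi/100 ∧
      |ω₂ - (Real.pi / 2 + h * Real.pi)| ≤ Real.pi/100 := by
    rintro ⟨ℓ, h, hℓ, hh⟩
    set t := 2 * Real.pi * Real.sqrt d / M * s with ht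
    have ht0 : 0 < t := by positivity
    have ht5 : t < Real.pi / 5 := by
      rw [ht, div_mul_eq_mul_div, div_lt_iff₀ hM0]
      have : s * (10 * Real.sqrt d) < M := (lt_div_iff₀ (by positivity)).mp hsM
      nlinarith
    set m : ℤ := (d : ℤ) + 3 - 4 * (h - 2 * ℓ) with hm
    have hm0 : m ≠ 0 := by
      intro h0
      rw [hm] at h0
      omega
    have heq : (m : ℝ) * Real.pi / 4 - t
        = (ω₂ - (Real.pi / 2 + h * Real.pi)) - 2 * (ω₁ - (Real.pi / 2 + ℓ * Real.pi)) := by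
      rw [hω₁, hω₂, ht, hm]
      push_cast
      ring
    obtain ⟨hℓ1, hℓ2⟩ := abs_le.mp hℓ
    obtain ⟨hh1, hh2⟩ := abs_le.mp hh
    rcases hm0.lt_or_gt with hneg | hpos
    · have hm1 : m ≤ -1 := by omega
      have : (m : ℝ) ≤ -1 := by exact_mod_cast hm1
      nlinarith
    · have : (1 : ℝ) ≤ (m : ℝ) := by exact_mod_cast hpos
      nlinarith
  refine ⟨?_, H⟩
  by_contra hc
  push_neg at hc
  have h1 : Real.cos ω₁ ^ 2 < 1/2500 := by nlinarith [sq_nonneg (Real.cos ω₂)]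
  have h2 : Real.cos ω₂ ^ 2 < 1/2500 := by nlinarith [sq_nonneg (Real.cos ω₁)]
  have e1 : ∃ n : ℤ, |ω₁ - (Real.pi/2 + (n : ℝ) * Real.pi)| ≤ Real.pi/100 := by
    by_contra he; exact absurd (cos_sq_lower ω₁ he) (not_le.mpr h1)
  have e2 : ∃ n : ℤ, |ω₂ - (Real.pi/2 + (n : ℝ) * Real.pi)| ≤ Real.pi/100 := by
    by_contra he; exact absurd (cos_sq_lower ω₂ he) (not_le.mpr h2)
  obtain ⟨ℓ, hℓ⟩ := e1
  obtain ⟨h, hh⟩ := e2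
  exact H ⟨ℓ, h, hℓ, hh⟩
end
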